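/- Let S denote the unilateral shift on ℓ²(ℕ). On the Hilbert space H = ℓ²(ℕ) ⊕ (⊕_{j=1}^∞ ℓ²(ℕ)) ⊕ (⊕_{j=1}^∞ ℓ²(ℕ)), the operator T = S ⊕ (⊕_{j=1}^∞ (j/(j+1)) S) ⊕ (⊕_{j=1}^∞ (j/(j+1)) S*) is not complex symmetric: there is no conjugation C on H with T = C T* C. -/

import Mathlib

open Filter ContinuousLinearMap

set_option maxHeartbeats 1000000

noncomputable section

/-- A conjugation on a complex Hilbert space `H` is a conjugate-linear, isometric
involution `C : H → H`. -/
def IsConjugation {H : Type*} [NormedAddCommGroup H] [InnerProductSpace ℂ H]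
    (C : H → H) : Prop :=
  (∀ x y : H, C (x + y) = C x + C y) ∧
  (∀ (a : ℂ) (x : H), C (a • x) = (starRingEnd ℂ) a • C x) ∧
  (∀ x : H, ‖C x‖ = ‖x‖) ∧
  (∀ x : H, C (C x) = x)

/-- A bounded operator `T` on a complex Hilbert space is complex symmetric if there is a
conjugation `C` with `T = C T* C`. -/
def IsComplexSymmetric {H : Type*} [NormedAddCommGroup H] [InnerProductSpace ℂ H]
    [CompleteSpace H] (T : H →L[ℂ] H) : Prop :=
  ∃ C : H → H, IsConjugation C ∧
    ∀ x : H, T x = C (ContinuousLinearMap.adjoint T (C x))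

/-- `ℓ²(ℕ)` over `ℂ`. -/
abbrev ellTwo : Type := lp (fun _ : ℕ => ℂ) 2

/-- `S` is the unilateral shift on `ℓ²(ℕ)`: `S (a₀, a₁, a₂, …) = (0, a₀, a₁, …)`. -/
def IsUnilateralShift (S : ellTwo →L[ℂ] ellTwo) : Prop :=
  ∀ a : ellTwo, S a 0 = 0 ∧ ∀ n : ℕ, S a (n + 1) = a n

/-- The coefficient `j/(j+1)`. -/
def coeff (j : ℕ+) : ℝ := (j : ℝ) / ((j : ℝ) + 1)

/-- `⊕_{j=1}^∞ ℓ²(ℕ)`. -/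
abbrev Bspace : Type := lp (fun _ : ℕ+ => ellTwo) 2

/-- The Hilbert space `H = ℓ²(ℕ) ⊕ (⊕_{j=1}^∞ ℓ²(ℕ)) ⊕ (⊕_{j=1}^∞ ℓ²(ℕ))`. -/
abbrev Hspace : Type := WithLp 2 (ellTwo × WithLp 2 (Bspace × Bspace))

/-- The operator `T = S ⊕ (⊕_{j=1}^∞ (j/(j+1)) S) ⊕ (⊕_{j=1}^∞ (j/(j+1)) S*)` on `H`,
acting coordinatewise. -/
def IsTheOperatorT (S : ellTwo →L[ℂ] ellTwo) (T : Hspace →L[ℂ] Hspace) : Prop :=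
  ∀ x : Hspace,
    (T x).ofLp.1 = S x.ofLp.1 ∧
    (∀ j : ℕ+, (T x).ofLp.2.ofLp.1 j = (coeff j : ℂ) • S (x.ofLp.2.ofLp.1 j)) ∧
    (∀ j : ℕ+, (T x).ofLp.2.ofLp.2 j = (coeff j : ℂ) • ContinuousLinearMap.adjoint S (x.ofLp.2.ofLp.2 j))

namespace AuxT

open scoped ENNReal

local notation "⟪" x ", " y "⟫" => @inner ℂ _ _ x y

lemma lp_hasSum_sq {ι : Type*} {G : ι → Type*} [∀ i, NormedAddCommGroup (G i)]
    (f : lp G 2) : HasSum (fun i => ‖f i‖ ^ 2) (‖f‖ ^ 2) := by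
  have h := lp.hasSum_norm (p := 2) (by norm_num) f
  have h2 : (2 : ℝ≥0∞).toReal = ((2 : ℕ) : ℝ) := by norm_num
  rw [h2] at h
  simpa only [Real.rpow_natCast] using h

lemma prod_norm_sq' {α β : Type*} [SeminormedAddCommGroup α] [SeminormedAddCommGroup β]
    (x : WithLp 2 (α × β)) : ‖x‖ ^ 2 = ‖x.ofLp.1‖ ^ 2 + ‖x.ofLp.2‖ ^ 2 :=
  WithLp.prod_norm_sq_eq_of_L2 x

lemma coeff_nonneg (j : ℕ+) : 0 ≤ coeff j := by
  unfold coeff; positivity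

lemma coeff_lt_one (j : ℕ+) : coeff j < 1 := by
  unfold coeff
  rw [div_lt_one (by positivity)]
  linarith

/-- `e₀` and `e₁` as elements of `Hspace`. -/
def e0H : Hspace := WithLp.toLp 2 ((lp.single 2 (0 : ℕ) (1 : ℂ) : ellTwo), (0 : WithLp 2 (Bspace × Bspace)))

def e1H : Hspace := WithLp.toLp 2 ((lp.single 2 (1 : ℕ) (1 : ℂ) : ellTwo), (0 : WithLp 2 (Bspace × Bspace)))

lemma norm_single_one (i : ℕ) : ‖(lp.single 2 i (1 : ℂ) : ellTwo)‖ = 1 := by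
  have := lp.norm_single (p := 2) (E := fun _ : ℕ => ℂ) (by norm_num) i (1 : ℂ)
  simpa using this

lemma norm_e0H : ‖e0H‖ = 1 := by
  have h : ‖e0H‖ ^ 2 = 1 := by
    rw [prod_norm_sq']
    show ‖(lp.single 2 (0 : ℕ) (1 : ℂ) : ellTwo)‖ ^ 2 + ‖(0 : WithLp 2 (Bspace × Bspace))‖ ^ 2 = 1
    rw [norm_single_one, norm_zero]; norm_num
  nlinarith [norm_nonneg e0H]

lemma norm_e1H : ‖e1H‖ = 1 := by
  have h : ‖e1H‖ ^ 2 = 1 := by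
    rw [prod_norm_sq']
    show ‖(lp.single 2 (1 : ℕ) (1 : ℂ) : ellTwo)‖ ^ 2 + ‖(0 : WithLp 2 (Bspace × Bspace))‖ ^ 2 = 1
    rw [norm_single_one, norm_zero]; norm_num
  nlinarith [norm_nonneg e1H]

variable {S : ellTwo →L[ℂ] ellTwo} (hS : IsUnilateralShift S)

include hS

lemma shift_isometry (a : ellTwo) : ‖S a‖ = ‖a‖ := by
  have h1 := lp_hasSum_sq (S a)
  have h2 := lp_hasSum_sq a
  have key : ∑' n, ‖S a n‖ ^ 2 = ∑' n, ‖a n‖ ^ 2 := by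
    rw [h1.summable.tsum_eq_zero_add]
    simp [(hS a).1, (hS a).2]
  rw [h1.tsum_eq, h2.tsum_eq] at key
  exact (sq_eq_sq₀ (norm_nonneg _) (norm_nonneg _)).mp key

lemma shift_norm_le : ‖S‖ ≤ 1 :=
  ContinuousLinearMap.opNorm_le_bound S zero_le_one fun a => by
    rw [shift_isometry hS, one_mul]

lemma adjoint_shift_le (v : ellTwo) : ‖ContinuousLinearMap.adjoint S v‖ ≤ ‖v‖ := by
  calc ‖ContinuousLinearMap.adjoint S v‖ ≤ ‖ContinuousLinearMap.adjoint S‖ * ‖v‖ :=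
        (ContinuousLinearMap.adjoint S).le_opNorm v
    _ = ‖S‖ * ‖v‖ := by rw [ContinuousLinearMap.adjoint.norm_map]
    _ ≤ 1 * ‖v‖ := by gcongr; exact shift_norm_le hS
    _ = ‖v‖ := one_mul _

variable {T : Hspace →L[ℂ] Hspace} (hT : IsTheOperatorT S T)

include hT

/-- If `T x` has the same norm as `x`, then the second and third block components of `x`
vanish (strict contractivity of the coefficients `j/(j+1) < 1`). -/
lemma second_third_zero (x : Hspace) (hx : ‖T x‖ = ‖x‖) :
    x.ofLp.2.ofLp.1 = 0 ∧ x.ofLp.2.ofLp.2 = 0 := by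
  obtain ⟨h1, h2, h3⟩ := hT x
  have hB1 := lp_hasSum_sq (x.ofLp.2.ofLp.1)
  have hB2 := lp_hasSum_sq (x.ofLp.2.ofLp.2)
  have hcn : ∀ j : ℕ+, ‖((coeff j : ℝ) : ℂ)‖ = coeff j := fun j => by
    rw [Complex.norm_real, Real.norm_eq_abs, abs_of_nonneg (coeff_nonneg j)]
  have hTB1 : HasSum (fun j => coeff j ^ 2 * ‖x.ofLp.2.ofLp.1 j‖ ^ 2) (‖(T x).ofLp.2.ofLp.1‖ ^ 2) := by
    have h := lp_hasSum_sq ((T x).ofLp.2.ofLp.1)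
    have e : (fun j => ‖(T x).ofLp.2.ofLp.1 j‖ ^ 2) = fun j => coeff j ^ 2 * ‖x.ofLp.2.ofLp.1 j‖ ^ 2 := by
      funext j
      rw [h2 j, norm_smul, hcn j, mul_pow, shift_isometry hS]
    rwa [e] at h
  have hTB2 : HasSum (fun j => coeff j ^ 2 * ‖ContinuousLinearMap.adjoint S (x.ofLp.2.ofLp.2 j)‖ ^ 2)
      (‖(T x).ofLp.2.ofLp.2‖ ^ 2) := by
    have h := lp_hasSum_sq ((T x).ofLp.2.ofLp.2)
    have e : (fun j => ‖(T x).ofLp.2.ofLp.2 j‖ ^ 2) =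
        fun j => coeff j ^ 2 * ‖ContinuousLinearMap.adjoint S (x.ofLp.2.ofLp.2 j)‖ ^ 2 := by
      funext j
      rw [h3 j, norm_smul, hcn j, mul_pow]
    rwa [e] at h
  have hxsq : ‖x‖ ^ 2 = ‖x.ofLp.1‖ ^ 2 + (‖x.ofLp.2.ofLp.1‖ ^ 2 + ‖x.ofLp.2.ofLp.2‖ ^ 2) := by
    rw [AuxT.prod_norm_sq', AuxT.prod_norm_sq']
  have hTxsq : ‖T x‖ ^ 2 = ‖x.ofLp.1‖ ^ 2 + (‖(T x).ofLp.2.ofLp.1‖ ^ 2 + ‖(T x).ofLp.2.ofLp.2‖ ^ 2) := by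
    rw [AuxT.prod_norm_sq', AuxT.prod_norm_sq', h1, shift_isometry hS]
  set f : ℕ+ → ℝ := fun j => (1 - coeff j ^ 2) * ‖x.ofLp.2.ofLp.1 j‖ ^ 2 +
      (‖x.ofLp.2.ofLp.2 j‖ ^ 2 - coeff j ^ 2 * ‖ContinuousLinearMap.adjoint S (x.ofLp.2.ofLp.2 j)‖ ^ 2) with hf
  have hsum0 : HasSum f 0 := by
    have hs := (hB1.sub hTB1).add (hB2.sub hTB2)
    have hv : ‖x.ofLp.2.ofLp.1‖ ^ 2 - ‖(T x).ofLp.2.ofLp.1‖ ^ 2 + (‖x.ofLp.2.ofLp.2‖ ^ 2 - ‖(T x).ofLp.2.ofLp.2‖ ^ 2) = 0 := by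
      have hx2 : ‖T x‖ ^ 2 = ‖x‖ ^ 2 := by rw [hx]
      rw [hxsq, hTxsq] at hx2
      linarith
    rw [hv] at hs
    have e : f = fun j => ‖x.ofLp.2.ofLp.1 j‖ ^ 2 - coeff j ^ 2 * ‖x.ofLp.2.ofLp.1 j‖ ^ 2 +
        (‖x.ofLp.2.ofLp.2 j‖ ^ 2 - coeff j ^ 2 * ‖ContinuousLinearMap.adjoint S (x.ofLp.2.ofLp.2 j)‖ ^ 2) := by
      funext j
      simp only [hf, sub_mul, one_mul]
    rw [e]
    exact hs
  have hnonneg : ∀ j, 0 ≤ f j := by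
    intro j
    have hc1 := coeff_lt_one j
    have hc0 := coeff_nonneg j
    have hle := adjoint_shift_le hS (x.ofLp.2.ofLp.2 j)
    have hd2 : ‖ContinuousLinearMap.adjoint S (x.ofLp.2.ofLp.2 j)‖ ^ 2 ≤ ‖x.ofLp.2.ofLp.2 j‖ ^ 2 := by
      have := norm_nonneg (ContinuousLinearMap.adjoint S (x.ofLp.2.ofLp.2 j)); nlinarith
    have h22 : coeff j ^ 2 * ‖ContinuousLinearMap.adjoint S (x.ofLp.2.ofLp.2 j)‖ ^ 2
        ≤ ‖x.ofLp.2.ofLp.2 j‖ ^ 2 := by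
      have hcc : coeff j ^ 2 ≤ 1 := by nlinarith
      have h0 := sq_nonneg (‖ContinuousLinearMap.adjoint S (x.ofLp.2.ofLp.2 j)‖)
      calc coeff j ^ 2 * ‖ContinuousLinearMap.adjoint S (x.ofLp.2.ofLp.2 j)‖ ^ 2
          ≤ 1 * ‖ContinuousLinearMap.adjoint S (x.ofLp.2.ofLp.2 j)‖ ^ 2 :=
            mul_le_mul_of_nonneg_right hcc h0
        _ = ‖ContinuousLinearMap.adjoint S (x.ofLp.2.ofLp.2 j)‖ ^ 2 := one_mul _
        _ ≤ ‖x.ofLp.2.ofLp.2 j‖ ^ 2 := hd2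
    have t1 : (0:ℝ) ≤ 1 - coeff j ^ 2 := by nlinarith
    have t2 : 0 ≤ (1 - coeff j ^ 2) * ‖x.ofLp.2.ofLp.1 j‖ ^ 2 := mul_nonneg t1 (sq_nonneg _)
    simp only [hf]
    linarith
  have hall : ∀ j, f j = 0 := by
    intro j
    refine le_antisymm ?_ (hnonneg j)
    exact le_hasSum hsum0 j fun k _ => hnonneg k
  constructor
  · refine lp.ext (funext fun j => ?_)
    have h := hall j
    have hc1 := coeff_lt_one j
    have hc0 := coeff_nonneg j
    have hle := adjoint_shift_le hS (x.ofLp.2.ofLp.2 j)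
    have hd2 : ‖ContinuousLinearMap.adjoint S (x.ofLp.2.ofLp.2 j)‖ ^ 2 ≤ ‖x.ofLp.2.ofLp.2 j‖ ^ 2 := by
      have := norm_nonneg (ContinuousLinearMap.adjoint S (x.ofLp.2.ofLp.2 j)); nlinarith
    have hb2 : 0 ≤ ‖x.ofLp.2.ofLp.2 j‖ ^ 2 - coeff j ^ 2 * ‖ContinuousLinearMap.adjoint S (x.ofLp.2.ofLp.2 j)‖ ^ 2 := by
      have hcc : coeff j ^ 2 ≤ 1 := by nlinarith
      have h0 := sq_nonneg (‖ContinuousLinearMap.adjoint S (x.ofLp.2.ofLp.2 j)‖)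
      nlinarith
    have hpos : (0:ℝ) < 1 - coeff j ^ 2 := by nlinarith
    have hz : (1 - coeff j ^ 2) * ‖x.ofLp.2.ofLp.1 j‖ ^ 2 = 0 := by
      have := mul_nonneg hpos.le (sq_nonneg (‖x.ofLp.2.ofLp.1 j‖))
      simp only [hf] at h
      linarith
    have hsq : ‖x.ofLp.2.ofLp.1 j‖ ^ 2 = 0 := (mul_eq_zero.mp hz).resolve_left (ne_of_gt hpos)
    have : ‖x.ofLp.2.ofLp.1 j‖ = 0 := pow_eq_zero_iff (n := 2) (by norm_num) |>.mp hsq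
    simpa [norm_eq_zero] using this
  · refine lp.ext (funext fun j => ?_)
    have h := hall j
    have hc1 := coeff_lt_one j
    have hc0 := coeff_nonneg j
    have hle := adjoint_shift_le hS (x.ofLp.2.ofLp.2 j)
    have hd2 : ‖ContinuousLinearMap.adjoint S (x.ofLp.2.ofLp.2 j)‖ ^ 2 ≤ ‖x.ofLp.2.ofLp.2 j‖ ^ 2 := by
      have := norm_nonneg (ContinuousLinearMap.adjoint S (x.ofLp.2.ofLp.2 j)); nlinarith
    have hpos : (0:ℝ) < 1 - coeff j ^ 2 := by nlinarith
    have hb2 : 0 ≤ ‖x.ofLp.2.ofLp.2 j‖ ^ 2 - coeff j ^ 2 * ‖ContinuousLinearMap.adjoint S (x.ofLp.2.ofLp.2 j)‖ ^ 2 := by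
      have hcc : coeff j ^ 2 ≤ 1 := by nlinarith
      have h0 := sq_nonneg (‖ContinuousLinearMap.adjoint S (x.ofLp.2.ofLp.2 j)‖)
      nlinarith
    have t2 : 0 ≤ (1 - coeff j ^ 2) * ‖x.ofLp.2.ofLp.1 j‖ ^ 2 := mul_nonneg hpos.le (sq_nonneg _)
    have heq : ‖x.ofLp.2.ofLp.2 j‖ ^ 2 - coeff j ^ 2 * ‖ContinuousLinearMap.adjoint S (x.ofLp.2.ofLp.2 j)‖ ^ 2 = 0 := by
      simp only [hf] at h
      linarith
    have hle2 : ‖x.ofLp.2.ofLp.2 j‖ ^ 2 ≤ coeff j ^ 2 * ‖x.ofLp.2.ofLp.2 j‖ ^ 2 :=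
      le_trans (by linarith) (mul_le_mul_of_nonneg_left hd2 (sq_nonneg (coeff j)))
    have hz : (1 - coeff j ^ 2) * ‖x.ofLp.2.ofLp.2 j‖ ^ 2 = 0 := by
      have h1 : (1 - coeff j ^ 2) * ‖x.ofLp.2.ofLp.2 j‖ ^ 2 ≤ 0 := by ring_nf; linarith [hle2]
      have h2 := mul_nonneg hpos.le (sq_nonneg (‖x.ofLp.2.ofLp.2 j‖))
      linarith
    have hsq : ‖x.ofLp.2.ofLp.2 j‖ ^ 2 = 0 := (mul_eq_zero.mp hz).resolve_left (ne_of_gt hpos)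
    have : ‖x.ofLp.2.ofLp.2 j‖ = 0 := pow_eq_zero_iff (n := 2) (by norm_num) |>.mp hsq
    simpa [norm_eq_zero] using this

/-- `T† e₁ = e₀`. -/
lemma adjT_e1 : ContinuousLinearMap.adjoint T e1H = e0H := by
  refine ext_inner_right ℂ fun z => ?_
  rw [ContinuousLinearMap.adjoint_inner_left]
  rw [WithLp.prod_inner_apply e1H (T z), WithLp.prod_inner_apply e0H z]
  have ha : e1H.ofLp.1 = (lp.single 2 (1 : ℕ) (1 : ℂ) : ellTwo) := rfl
  have hb : e1H.ofLp.2 = 0 := rfl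
  have hc : e0H.ofLp.1 = (lp.single 2 (0 : ℕ) (1 : ℂ) : ellTwo) := rfl
  have hd : e0H.ofLp.2 = 0 := rfl
  rw [ha, hb, hc, hd, inner_zero_left, inner_zero_left, lp.inner_single_left,
    lp.inner_single_left, (hT z).1]
  have he : (S z.ofLp.1) 1 = z.ofLp.1 0 := by simpa using (hS z.ofLp.1).2 0
  rw [he]

/-- `T† e₀ = 0`. -/
lemma adjT_e0 : ContinuousLinearMap.adjoint T e0H = 0 := by
  refine ext_inner_right ℂ fun z => ?_
  rw [ContinuousLinearMap.adjoint_inner_left, inner_zero_left]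
  rw [WithLp.prod_inner_apply]
  have hc : e0H.ofLp.1 = (lp.single 2 (0 : ℕ) (1 : ℂ) : ellTwo) := rfl
  have hd : e0H.ofLp.2 = 0 := rfl
  rw [hc, hd, inner_zero_left, lp.inner_single_left, (hT z).1, (hS z.ofLp.1).1]
  simp

end AuxT

/-- The operator `T = S ⊕ (⊕_j (j/(j+1)) S) ⊕ (⊕_j (j/(j+1)) S*)` on
`H = ℓ²(ℕ) ⊕ (⊕_{j=1}^∞ ℓ²(ℕ)) ⊕ (⊕_{j=1}^∞ ℓ²(ℕ))` is not complex symmetric: there is no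
conjugation `C` on `H` with `T = C T* C`. -/
theorem T_not_complexSymmetric
    (S : ellTwo →L[ℂ] ellTwo) (hS : IsUnilateralShift S)
    (T : Hspace →L[ℂ] Hspace) (hT : IsTheOperatorT S T) :
    ¬ IsComplexSymmetric T := by
  rintro ⟨C, ⟨Cadd, Csmul, Ciso, Cinv⟩, hC⟩
  have hC0 : C 0 = 0 := by
    have h := Csmul 0 0
    simpa using h
  set x : Hspace := C AuxT.e1H with hxdef
  have hTx : T x = C AuxT.e0H := by
    calc T (C AuxT.e1H) = C (ContinuousLinearMap.adjoint T (C (C AuxT.e1H))) := hC _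
      _ = C (ContinuousLinearMap.adjoint T AuxT.e1H) := by rw [Cinv]
      _ = C AuxT.e0H := by rw [AuxT.adjT_e1 hS hT]
  have hnx : ‖x‖ = 1 := by rw [hxdef, Ciso, AuxT.norm_e1H]
  have hnTx : ‖T x‖ = 1 := by rw [hTx, Ciso, AuxT.norm_e0H]
  obtain ⟨h21, h22⟩ := AuxT.second_third_zero hS hT x (by rw [hnx, hnTx])
  have hTTx : T (T x) = 0 := by
    calc T (T x) = C (ContinuousLinearMap.adjoint T (C (T x))) := hC _
      _ = C (ContinuousLinearMap.adjoint T (C (C AuxT.e0H))) := by rw [hTx]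
      _ = C (ContinuousLinearMap.adjoint T AuxT.e0H) := by rw [Cinv]
      _ = C 0 := by rw [AuxT.adjT_e0 hS hT]
      _ = 0 := hC0
  have hSS : S (S x.ofLp.1) = 0 := by
    have h := (hT (T x)).1
    rw [hTTx] at h
    rw [(hT x).1] at h
    exact h.symm
  have hx1 : ‖x.ofLp.1‖ = 0 := by
    have := AuxT.shift_isometry hS (S x.ofLp.1)
    rw [hSS, norm_zero] at this
    rw [← AuxT.shift_isometry hS x.ofLp.1, ← this]
  have hx2 : ‖x.ofLp.2‖ = 0 := by
    have h : ‖x.ofLp.2‖ ^ 2 = 0 := by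
      rw [AuxT.prod_norm_sq', h21, h22, norm_zero]
      norm_num
    nlinarith [norm_nonneg x.ofLp.2]
  have : ‖x‖ ^ 2 = 0 := by
    rw [AuxT.prod_norm_sq', hx1, hx2]
    norm_num
  rw [hnx] at this
  norm_num at this
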